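/- arXiv:1311.3329 — 2 statements merged into one kernel-verified Lean document; each statement's English description precedes it below -/
import Mathlib

section
/- Let ω ⊂ ℝ^{n-1} be a bounded convex domain, 0 < α < 1, and η ∈ C^{0,α}(ω̄) with η ≥ η_min > 0. Then for every x₀, x₁ ∈ ω there exists a piecewise smooth curve Θ : [0,2] → Ω̄_η with Θ(0) = (x₀, η(x₀)), Θ(2) = (x₁, η(x₁)), Θ(r) ∈ Ω̄_η for all r, and |Θ'(r)| ≤ C |x₁ - x₀|^α for a.e. r ∈ [0,2], where C depends only on ω, η, and α (not on x₀, x₁). -/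
open Set MeasureTheory Filter

set_option maxHeartbeats 1600000

/-- existence of piecewise-smooth connecting curves in the closed subgraph
domain, with derivative bounded by `C |x₁ - x₀|^α`, `C` uniform in `x₀, x₁`. -/
theorem stmt7 {n : ℕ} (hn : 2 ≤ n) (ω : Set (EuclideanSpace ℝ (Fin (n - 1))))
    (hopen : IsOpen ω) (hconv : Convex ℝ ω) (hbdd : Bornology.IsBounded ω)
    (α L ηmin : ℝ) (hα0 : 0 < α) (hα1 : α < 1) (hL : 0 ≤ L) (hηmin : 0 < ηmin)
    (η : EuclideanSpace ℝ (Fin (n - 1)) → ℝ)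
    (hHol : ∀ x ∈ closure ω, ∀ y ∈ closure ω, |η x - η y| ≤ L * ‖x - y‖ ^ α)
    (hlb : ∀ x ∈ closure ω, ηmin ≤ η x) :
    ∃ C > 0, ∀ x₀ ∈ ω, ∀ x₁ ∈ ω,
      ∃ Θ Θ' : ℝ → EuclideanSpace ℝ (Fin (n - 1)) × ℝ, ∃ F : Finset ℝ,
        ContinuousOn Θ (Icc (0:ℝ) 2) ∧
        Θ 0 = (x₀, η x₀) ∧ Θ 2 = (x₁, η x₁) ∧
        (∀ r ∈ Icc (0:ℝ) 2,
          Θ r ∈ closure {p : EuclideanSpace ℝ (Fin (n - 1)) × ℝ |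
            p.1 ∈ ω ∧ 0 < p.2 ∧ p.2 < η p.1}) ∧
        (∀ r ∈ Icc (0:ℝ) 2 \ (F : Set ℝ), HasDerivAt Θ (Θ' r) r) ∧
        (∀ᵐ r ∂(volume.restrict (Icc (0:ℝ) 2)), ‖Θ' r‖ ≤ C * ‖x₁ - x₀‖ ^ α) := by
  obtain ⟨D, hD⟩ := Metric.isBounded_iff.mp hbdd
  set M : ℝ := max D 1 with hMdef
  have hM1 : (1:ℝ) ≤ M := le_max_right _ _
  set C : ℝ := 3*L + 3/2*M + 3 with hCdef
  have hCpos : 0 < C := by have : (0:ℝ) < M := by linarith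
                           simp only [hCdef]; nlinarith
  -- auxiliary: closure membership
  have hclmem : ∀ x ∈ ω, ∀ y : ℝ, 0 < y → y ≤ η x →
      ((x, y) : EuclideanSpace ℝ (Fin (n - 1)) × ℝ) ∈
        closure {p : EuclideanSpace ℝ (Fin (n - 1)) × ℝ |
          p.1 ∈ ω ∧ 0 < p.2 ∧ p.2 < η p.1} := by
    intro x hx y hy0 hy1
    have htt : Tendsto (fun t : ℝ => ((x, t) : EuclideanSpace ℝ (Fin (n - 1)) × ℝ))
        (nhdsWithin y (Iio y)) (nhds (x, y)) :=
      Tendsto.prodMk_nhds tendsto_const_nhds (tendsto_id.mono_left nhdsWithin_le_nhds)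
    refine mem_closure_of_tendsto htt ?_
    filter_upwards [self_mem_nhdsWithin,
      ((eventually_gt_nhds hy0).filter_mono nhdsWithin_le_nhds)] with t ht1 ht2
    exact ⟨hx, ht2, lt_of_lt_of_le ht1 hy1⟩
  refine ⟨C, hCpos, ?_⟩
  intro x₀ hx₀ x₁ hx₁
  set d : ℝ := ‖x₁ - x₀‖ with hddef
  have hd0 : 0 ≤ d := norm_nonneg _
  have hdα : 0 ≤ d ^ α := Real.rpow_nonneg hd0 α
  have hdM : d ≤ M := by
    have := hD hx₁ hx₀
    rw [dist_eq_norm] at this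
    exact le_trans this (le_max_left _ _)
  have hdd : d ≤ M * d ^ α := by
    rcases eq_or_lt_of_le hd0 with h0 | h0
    · rw [← h0, Real.zero_rpow hα0.ne', mul_zero]
    · have h1 : d = d ^ (1 - α) * d ^ α := by
        rw [← Real.rpow_add h0, sub_add_cancel, Real.rpow_one]
      have h2 : d ^ (1 - α) ≤ M ^ (1 - α) :=
        Real.rpow_le_rpow hd0 hdM (by linarith)
      have h3 : M ^ (1 - α) ≤ M ^ (1:ℝ) :=
        Real.rpow_le_rpow_of_exponent_le hM1 (by linarith)
      rw [Real.rpow_one] at h3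
      calc d = d ^ (1 - α) * d ^ α := h1
        _ ≤ M * d ^ α := by
            exact mul_le_mul_of_nonneg_right (le_trans h2 h3) hdα
  set h : ℝ := L * d ^ α with hhdef
  have hh0 : 0 ≤ h := mul_nonneg hL hdα
  have hcl0 : x₀ ∈ closure ω := subset_closure hx₀
  have hcl1 : x₁ ∈ closure ω := subset_closure hx₁
  have hη0 : ηmin ≤ η x₀ := hlb _ hcl0
  have hη1 : ηmin ≤ η x₁ := hlb _ hcl1
  have hHol01 : |η x₀ - η x₁| ≤ h := by
    have := hHol x₀ hcl0 x₁ hcl1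
    rwa [norm_sub_rev x₀ x₁] at this
  obtain ⟨hH1, hH2⟩ := abs_le.mp hHol01
  set c : ℝ := max (η x₀ - h) ηmin with hcdef
  have hc_pos : 0 < c := lt_of_lt_of_le hηmin (le_max_right _ _)
  have hc0 : c ≤ η x₀ := max_le (by linarith) hη0
  have hc1 : c ≤ η x₁ := max_le (by linarith) hη1
  have hcge : η x₀ - h ≤ c := le_max_left _ _
  have hgap0 : η x₀ - c ≤ h := by linarith
  have hgap1 : η x₁ - c ≤ 2*h := by linarith
  clear_value M C d h c
  -- along the segment, c is below η
  have hseg : ∀ t : ℝ, 0 ≤ t → t ≤ 1 →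
      (x₀ + t • (x₁ - x₀)) ∈ ω ∧ c ≤ η (x₀ + t • (x₁ - x₀)) := by
    intro t ht0 ht1
    have hmem : (x₀ + t • (x₁ - x₀)) ∈ ω := by
      have := hconv hx₀ hx₁ (by linarith : (0:ℝ) ≤ 1 - t) ht0 (by ring)
      convert this using 1
      module
    refine ⟨hmem, ?_⟩
    have hnorm : ‖(x₀ + t • (x₁ - x₀)) - x₀‖ = t * d := by
      rw [add_sub_cancel_left, norm_smul, Real.norm_of_nonneg ht0, hddef]
    have hle : |η x₀ - η (x₀ + t • (x₁ - x₀))| ≤ h := by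
      have h1 := hHol x₀ hcl0 _ (subset_closure hmem)
      rw [norm_sub_rev, hnorm] at h1
      refine le_trans h1 ?_
      have h2 : (t * d) ^ α ≤ d ^ α :=
        Real.rpow_le_rpow (mul_nonneg ht0 hd0) (by nlinarith) (le_of_lt hα0)
      rw [hhdef]
      exact mul_le_mul_of_nonneg_left h2 hL
    obtain ⟨h3, h4⟩ := abs_le.mp hle
    rw [hcdef]
    refine max_le (by linarith) (hlb _ (subset_closure hmem))
  -- the curve
  refine ⟨fun r => (x₀ + (min 1 (max 0 ((3*r-2)/2))) • (x₁ - x₀),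
            η x₀ + (min 1 (3*r/2)) * (c - η x₀) + (max 0 ((3*r-4)/2)) * (η x₁ - c)),
          fun r => if r < 2/3 then (0, 3/2*(c - η x₀))
                   else if r < 4/3 then ((3/2:ℝ) • (x₁ - x₀), (0:ℝ))
                   else (0, 3/2*(η x₁ - c)),
          {2/3, 4/3}, ?_, ?_, ?_, ?_, ?_, ?_⟩
  · -- continuity
    apply Continuous.continuousOn
    fun_prop
  · -- value at 0
    beta_reduce
    norm_num
  · -- value at 2
    beta_reduce
    have h1 : min (1:ℝ) (max 0 ((3*2-2)/2)) = 1 := by norm_num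
    have h2 : min (1:ℝ) (3*2/2) = 1 := by norm_num
    have h3 : max (0:ℝ) ((3*2-4)/2) = 1 := by norm_num
    rw [h1, h2, h3, one_smul]
    rw [Prod.ext_iff]
    exact ⟨by module, by ring⟩
  · -- membership in closure
    intro r hr
    obtain ⟨hr0, hr2⟩ := hr
    beta_reduce
    rcases le_or_gt r (2/3) with hA | hA
    · -- first piece
      have e1 : min (1:ℝ) (max 0 ((3*r-2)/2)) = 0 := by
        rw [max_eq_left (by linarith), min_eq_right (by norm_num)]
      have e2 : min (1:ℝ) (3*r/2) = 3*r/2 := min_eq_right (by linarith)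
      have e3 : max (0:ℝ) ((3*r-4)/2) = 0 := max_eq_left (by linarith)
      rw [e1, e2, e3, zero_smul, add_zero, zero_mul, add_zero]
      exact hclmem x₀ hx₀ _ (by nlinarith) (by nlinarith)
    · rcases le_or_gt r (4/3) with hB | hB
      · -- middle piece
        have e1 : min (1:ℝ) (max 0 ((3*r-2)/2)) = (3*r-2)/2 := by
          rw [max_eq_right (by linarith)]
          exact min_eq_right (by linarith)
        have e2 : min (1:ℝ) (3*r/2) = 1 := min_eq_left (by linarith)
        have e3 : max (0:ℝ) ((3*r-4)/2) = 0 := max_eq_left (by linarith)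
        rw [e1, e2, e3, zero_mul, add_zero, one_mul]
        obtain ⟨hm, hcle⟩ := hseg ((3*r-2)/2) (by linarith) (by linarith)
        have : η x₀ + (c - η x₀) = c := by ring
        rw [this]
        exact hclmem _ hm _ hc_pos hcle
      · -- last piece
        have e1 : min (1:ℝ) (max 0 ((3*r-2)/2)) = 1 := by
          rw [max_eq_right (by linarith)]
          exact min_eq_left (by linarith)
        have e2 : min (1:ℝ) (3*r/2) = 1 := min_eq_left (by linarith)
        have e3 : max (0:ℝ) ((3*r-4)/2) = (3*r-4)/2 := max_eq_right (by linarith)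
        rw [e1, e2, e3, one_smul, one_mul]
        have hx1eq : x₀ + (x₁ - x₀) = x₁ := by module
        rw [hx1eq]
        have hs0 : (0:ℝ) ≤ (3*r-4)/2 := by linarith
        have hs1 : (3*r-4)/2 ≤ 1 := by linarith
        refine hclmem x₁ hx₁ _ (by nlinarith) (by nlinarith)
  · -- derivatives
    intro r hr
    obtain ⟨⟨hr0, hr2⟩, hrF⟩ := hr
    simp only [Finset.coe_insert, Finset.coe_singleton, mem_insert_iff,
      mem_singleton_iff, not_or] at hrF
    obtain ⟨hne1, hne2⟩ := hrF
    beta_reduce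
    rcases lt_or_gt_of_ne hne1 with hA | hA
    · -- r < 2/3
      rw [if_pos hA]
      have hg : HasDerivAt (fun s : ℝ =>
          ((x₀, η x₀ + (3*s/2) * (c - η x₀)) : EuclideanSpace ℝ (Fin (n - 1)) × ℝ))
          (0, 3/2*(c - η x₀)) r := by
        refine HasDerivAt.prodMk (hasDerivAt_const r x₀) ?_
        have h1 : HasDerivAt (fun s : ℝ => 3*s/2) (3/2) r := by
          simpa using ((hasDerivAt_id r).const_mul 3).div_const 2
        simpa using (h1.mul_const (c - η x₀)).const_add (η x₀)
      refine hg.congr_of_eventuallyEq ?_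
      filter_upwards [Iio_mem_nhds hA] with s hs
      have e1 : min (1:ℝ) (max 0 ((3*s-2)/2)) = 0 := by
        rw [max_eq_left (by simp only [mem_Iio] at hs; linarith),
          min_eq_right (by norm_num)]
      have e2 : min (1:ℝ) (3*s/2) = 3*s/2 :=
        min_eq_right (by simp only [mem_Iio] at hs; linarith)
      have e3 : max (0:ℝ) ((3*s-4)/2) = 0 :=
        max_eq_left (by simp only [mem_Iio] at hs; linarith)
      rw [e1, e2, e3, zero_smul, add_zero, zero_mul, add_zero]
    · rcases lt_or_gt_of_ne hne2 with hB | hB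
      · -- 2/3 < r < 4/3
        rw [if_neg (by push_neg; linarith), if_pos hB]
        have hg : HasDerivAt (fun s : ℝ =>
            ((x₀ + ((3*s-2)/2) • (x₁ - x₀), c) : EuclideanSpace ℝ (Fin (n - 1)) × ℝ))
            ((3/2:ℝ) • (x₁ - x₀), (0:ℝ)) r := by
          refine HasDerivAt.prodMk ?_ (hasDerivAt_const r c)
          have h1 : HasDerivAt (fun s : ℝ => (3*s-2)/2) (3/2) r := by
            simpa using (((hasDerivAt_id r).const_mul 3).sub_const 2).div_const 2
          simpa using (h1.smul_const (x₁ - x₀)).const_add x₀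
        refine hg.congr_of_eventuallyEq ?_
        filter_upwards [Ioo_mem_nhds hA hB] with s hs
        obtain ⟨hs1, hs2⟩ := hs
        have e1 : min (1:ℝ) (max 0 ((3*s-2)/2)) = (3*s-2)/2 := by
          rw [max_eq_right (by linarith)]
          exact min_eq_right (by linarith)
        have e2 : min (1:ℝ) (3*s/2) = 1 := min_eq_left (by linarith)
        have e3 : max (0:ℝ) ((3*s-4)/2) = 0 := max_eq_left (by linarith)
        rw [e1, e2, e3, zero_mul, add_zero, one_mul]
        have : η x₀ + (c - η x₀) = c := by ring
        rw [this]
      · -- r > 4/3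
        rw [if_neg (by push_neg; linarith), if_neg (by push_neg; linarith)]
        have hg : HasDerivAt (fun s : ℝ =>
            ((x₀ + (x₁ - x₀), c + ((3*s-4)/2) * (η x₁ - c)) :
              EuclideanSpace ℝ (Fin (n - 1)) × ℝ))
            (0, 3/2*(η x₁ - c)) r := by
          refine HasDerivAt.prodMk (hasDerivAt_const r _) ?_
          have h1 : HasDerivAt (fun s : ℝ => (3*s-4)/2) (3/2) r := by
            simpa using (((hasDerivAt_id r).const_mul 3).sub_const 4).div_const 2
          simpa using (h1.mul_const (η x₁ - c)).const_add c
        refine hg.congr_of_eventuallyEq ?_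
        filter_upwards [Ioi_mem_nhds hB] with s hs
        simp only [mem_Ioi] at hs
        have e1 : min (1:ℝ) (max 0 ((3*s-2)/2)) = 1 := by
          rw [max_eq_right (by linarith)]
          exact min_eq_left (by linarith)
        have e2 : min (1:ℝ) (3*s/2) = 1 := min_eq_left (by linarith)
        have e3 : max (0:ℝ) ((3*s-4)/2) = (3*s-4)/2 := max_eq_right (by linarith)
        rw [e1, e2, e3, one_smul, one_mul]
        rw [Prod.ext_iff]
        exact ⟨rfl, by ring⟩
  · -- a.e. derivative bound
    refine Eventually.of_forall ?_
    intro r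
    beta_reduce
    have hCd0 : 0 ≤ C * d ^ α := mul_nonneg hCpos.le hdα
    rcases lt_or_ge r (2/3) with hA | hA
    · rw [if_pos hA, Prod.norm_def]
      refine max_le (by simpa using hCd0) ?_
      rw [Real.norm_eq_abs, abs_of_nonpos (by nlinarith)]
      have hLd : 0 ≤ L * d ^ α := mul_nonneg hL hdα
      have hMd : 0 ≤ M * d ^ α := mul_nonneg (by linarith) hdα
      simp only [hCdef]
      nlinarith
    · rcases lt_or_ge r (4/3) with hB | hB
      · rw [if_neg (by push_neg; linarith), if_pos hB, Prod.norm_def]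
        refine max_le ?_ (by simpa using hCd0)
        rw [norm_smul, Real.norm_eq_abs, abs_of_nonneg (by norm_num)]
        have hLd : 0 ≤ L * d ^ α := mul_nonneg hL hdα
        simp only [hCdef]
        nlinarith
      · rw [if_neg (by push_neg; linarith), if_neg (by push_neg; linarith), Prod.norm_def]
        refine max_le (by simpa using hCd0) ?_
        rw [Real.norm_eq_abs, abs_of_nonneg (by nlinarith)]
        have hLd : 0 ≤ L * d ^ α := mul_nonneg hL hdα
        have hMd : 0 ≤ M * d ^ α := mul_nonneg (by linarith) hdα
        simp only [hCdef]
        nlinarith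
end

section
/- Let ω ⊂ ℝ^{n-1}, 0 < α < 1, L > 0, and let x₀, x₁ ∈ ω. Suppose η : ω → ℝ is α-Hölder with constant L, η ≥ η_min > 0, and that the function r ↦ y_r = η(x₀) - L r |x₁ - x₀|^α on [0,1] crosses the level η_min at some r₀ ∈ (0,1). Then the truncated curve r ↦ (x_r, max(y_r, η_min)) for r ∈ [0,1], with x_r = x₀ + r^{1/α}(x₁ - x₀), remains in the closed subgraph {(x, y) : x ∈ ω, η_min ≤ y ≤ η(x)} (assuming x_r ∈ ω for all r) and is Lipschitz in r with a.e. derivative bounded by C(1 + L)(1 + 1/α) max(1, diam(ω)^{1-α}) |x₁ - x₀|^α for an absolute constant C. -/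
open Set MeasureTheory

private lemma lipOn_weaken {α β : Type*} [PseudoEMetricSpace α] [PseudoEMetricSpace β]
    {K K' : NNReal} {f : α → β} {s : Set α} (hf : LipschitzOnWith K f s) (h : K ≤ K') :
    LipschitzOnWith K' f s :=
  fun x hx y hy => (hf hx hy).trans (mul_le_mul_left (by exact_mod_cast h) _)

private lemma rpow_lipschitz {p : ℝ} (hp : 1 ≤ p) :
    LipschitzOnWith p.toNNReal (fun r : ℝ => r ^ p) (Icc (0:ℝ) 1) := by
  have hp0 : (0:ℝ) ≤ p := le_trans zero_le_one hp
  apply (convex_Icc (0:ℝ) 1).lipschitzOnWith_of_nnnorm_hasDerivWithin_le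
    (f' := fun x => p * x ^ (p - 1))
  · intro x _
    exact (Real.hasDerivAt_rpow_const (Or.inr hp)).hasDerivWithinAt
  · intro x hx
    rw [← NNReal.coe_le_coe]
    simp only [coe_nnnorm, Real.coe_toNNReal _ hp0, Real.norm_eq_abs]
    have h1 : x ^ (p - 1) ≤ 1 := Real.rpow_le_one hx.1 hx.2 (by linarith)
    have h2 : 0 ≤ x ^ (p - 1) := Real.rpow_nonneg hx.1 _
    rw [abs_mul, abs_of_nonneg hp0, abs_of_nonneg h2]
    nlinarith

/-- Case 2 of the curve construction: the truncated descending curve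
`r ↦ (x_r, max(y_r, η_min))` stays in the closed subgraph `{η_min ≤ y ≤ η(x)}` and is
Lipschitz with constant `C(1+L)(1+1/α)max(1, diam(ω)^{1-α})|x₁-x₀|^α` for an absolute
constant `C`. -/
theorem stmt16 :
    ∃ C > 0, ∀ (m : ℕ) (ω : Set (EuclideanSpace ℝ (Fin m))),
      Bornology.IsBounded ω → ∀ (α L ηmin : ℝ), 0 < α → α < 1 → 0 < L → 0 < ηmin →
      ∀ η : EuclideanSpace ℝ (Fin m) → ℝ,
      (∀ x ∈ ω, ∀ y ∈ ω, |η x - η y| ≤ L * ‖x - y‖ ^ α) →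
      (∀ x ∈ ω, ηmin ≤ η x) →
      ∀ x₀ ∈ ω, ∀ x₁ ∈ ω,
      (∀ r ∈ Icc (0:ℝ) 1, x₀ + r ^ (1/α) • (x₁ - x₀) ∈ ω) →
      (∃ r₀ ∈ Ioo (0:ℝ) 1, η x₀ - L * r₀ * ‖x₁ - x₀‖ ^ α = ηmin) →
      (∀ r ∈ Icc (0:ℝ) 1,
        ηmin ≤ max (η x₀ - L * r * ‖x₁ - x₀‖ ^ α) ηmin ∧
        max (η x₀ - L * r * ‖x₁ - x₀‖ ^ α) ηmin ≤ η (x₀ + r ^ (1/α) • (x₁ - x₀))) ∧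
      LipschitzOnWith
        (Real.toNNReal (C * (1 + L) * (1 + 1/α) * max 1 (Metric.diam ω ^ (1 - α)) *
          ‖x₁ - x₀‖ ^ α))
        (fun r : ℝ =>
          ((x₀ + r ^ (1/α) • (x₁ - x₀), max (η x₀ - L * r * ‖x₁ - x₀‖ ^ α) ηmin) :
            EuclideanSpace ℝ (Fin m) × ℝ))
        (Icc (0:ℝ) 1) := by
  refine ⟨1, one_pos, ?_⟩
  intro m ω hbdd α L ηmin hα0 hα1 hL hηmin η hHold hlb x₀ hx₀ x₁ hx₁ hmem _hcross
  set v : EuclideanSpace ℝ (Fin m) := x₁ - x₀ with hv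
  set M : ℝ := ‖v‖ ^ α with hM
  have hM0 : 0 ≤ M := Real.rpow_nonneg (norm_nonneg _) _
  have hp : (1 : ℝ) ≤ 1 / α := by
    rw [le_div_iff₀ hα0]; linarith
  have hp0 : (0:ℝ) < 1/α := by positivity
  -- key rpow identity
  have hpow : ∀ r : ℝ, 0 ≤ r → (r ^ (1/α)) ^ α = r := by
    intro r hr
    rw [← Real.rpow_mul hr, one_div, inv_mul_cancel₀ hα0.ne', Real.rpow_one]
  -- the qualitative part
  have hKM : ‖v‖ ≤ max 1 (Metric.diam ω ^ (1 - α)) * M := by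
    rcases eq_or_lt_of_le (norm_nonneg v) with h0 | h0
    · rw [← h0]; positivity
    · have hd : ‖v‖ ≤ Metric.diam ω := by
        rw [hv, ← dist_eq_norm]
        exact Metric.dist_le_diam_of_mem hbdd hx₁ hx₀
      have h1 : ‖v‖ = ‖v‖ ^ (1 - α) * M := by
        rw [hM, ← Real.rpow_add h0]
        simp
      have h2 : ‖v‖ ^ (1 - α) ≤ Metric.diam ω ^ (1 - α) :=
        Real.rpow_le_rpow (norm_nonneg _) hd (by linarith)
      rw [h1]
      exact mul_le_mul_of_nonneg_right (h2.trans (le_max_right _ _)) hM0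
  constructor
  · intro r hr
    refine ⟨le_max_right _ _, max_le ?_ (hlb _ (hmem r hr))⟩
    have h := hHold x₀ hx₀ _ (hmem r hr)
    have hxr : ‖x₀ - (x₀ + r ^ (1/α) • v)‖ = r ^ (1/α) * ‖v‖ := by
      rw [show x₀ - (x₀ + r ^ (1/α) • v) = -(r ^ (1/α) • v) by abel, norm_neg, norm_smul,
        Real.norm_eq_abs, abs_of_nonneg (Real.rpow_nonneg hr.1 _)]
    rw [hxr, Real.mul_rpow (Real.rpow_nonneg hr.1 _) (norm_nonneg _), hpow r hr.1] at h
    have := abs_le.mp h |>.2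
    have hLM : L * (r * M) = L * r * M := by ring
    nlinarith [abs_le.mp h]
  · -- Lipschitz part
    set K : ℝ := 1 * (1 + L) * (1 + 1/α) * max 1 (Metric.diam ω ^ (1 - α)) * M with hK
    have hK0 : 0 ≤ K := by
      have : (0:ℝ) ≤ max 1 (Metric.diam ω ^ (1 - α)) := le_trans zero_le_one (le_max_left _ _)
      positivity
    -- first component
    have lip1 : LipschitzOnWith (‖v‖₊ * (1/α).toNNReal)
        (fun r : ℝ => x₀ + r ^ (1/α) • v) (Icc (0:ℝ) 1) := by
      have base : LipschitzWith ‖v‖₊ (fun t : ℝ => x₀ + t • v) := by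
        apply LipschitzWith.of_dist_le_mul
        intro x y
        rw [dist_eq_norm]
        simp only [add_sub_add_left_eq_sub, ← sub_smul, norm_smul, Real.norm_eq_abs]
        rw [dist_eq_norm, Real.norm_eq_abs, coe_nnnorm]
        ring_nf
        exact le_refl _
      exact base.comp_lipschitzOnWith (rpow_lipschitz hp)
    -- second component
    have lip2 : LipschitzOnWith (L * M).toNNReal
        (fun r : ℝ => max (η x₀ - L * r * M) ηmin) (Icc (0:ℝ) 1) := by
      have inner : LipschitzWith (L * M).toNNReal (fun r : ℝ => η x₀ - L * r * M) := by
        apply LipschitzWith.of_dist_le_mul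
        intro x y
        rw [Real.dist_eq, Real.dist_eq, Real.coe_toNNReal _ (by positivity)]
        have : η x₀ - L * x * M - (η x₀ - L * y * M) = (L * M) * (y - x) := by ring
        rw [this, abs_mul, abs_of_nonneg (by positivity : (0:ℝ) ≤ L * M), abs_sub_comm]
      exact (inner.max_const ηmin).lipschitzOnWith
    have pair := lip1.prodMk lip2
    apply lipOn_weaken pair
    rw [max_le_iff]
    have hmax1 : (1:ℝ) ≤ max 1 (Metric.diam ω ^ (1 - α)) := le_max_left _ _
    constructor
    · rw [← NNReal.coe_le_coe]
      push_cast
      rw [Real.coe_toNNReal _ hp0.le, Real.coe_toNNReal _ hK0]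
      have hA : 1/α ≤ (1 + L) * (1 + 1/α) := by nlinarith [mul_pos hL hp0]
      have hXM : 0 ≤ max 1 (Metric.diam ω ^ (1 - α)) * M :=
        mul_nonneg (le_trans zero_le_one hmax1) hM0
      calc ‖v‖ * (1/α) ≤ (max 1 (Metric.diam ω ^ (1 - α)) * M) * (1/α) := by gcongr
          _ ≤ (max 1 (Metric.diam ω ^ (1 - α)) * M) * ((1 + L) * (1 + 1/α)) :=
            mul_le_mul_of_nonneg_left hA hXM
          _ = K := by rw [hK]; ring
    · rw [← NNReal.coe_le_coe]
      rw [Real.coe_toNNReal _ (by positivity : (0:ℝ) ≤ L * M), Real.coe_toNNReal _ hK0]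
      have hA : L ≤ (1 + L) * (1 + 1/α) := by nlinarith [mul_pos hL hp0]
      calc L * M ≤ ((1 + L) * (1 + 1/α)) * M := mul_le_mul_of_nonneg_right hA hM0
          _ ≤ ((1 + L) * (1 + 1/α)) * (max 1 (Metric.diam ω ^ (1 - α)) * M) := by
            apply mul_le_mul_of_nonneg_left _ (by nlinarith [mul_pos hL hp0])
            nlinarith [mul_nonneg (le_trans zero_le_one hmax1) hM0, hmax1]
          _ = K := by rw [hK]; ring
end
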